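/- Let f : ℝ → ℝ be a continuous function for which there exist A, α > 0 with |f(x)| ≤ A(1+|x|)^α for all x ∈ ℝ. Then for every integer n ≥ 0 there exist C > 0 and T₀ > 0 such that ∫_{{x : |x − 2T^{3/2}| > T^{3/2}}} |f(x)| u_T(x) dx ≤ C T^{−n} for all T ≥ T₀. -/

import Mathlib

open MeasureTheory Set

noncomputable section

/-- `e2 z = e^{2πiz}`. -/
def e2 (z : ℂ) : ℂ := Complex.exp (2 * Real.pi * Complex.I * z)

/-- `φ₀` is a smooth even bump function supported in `[-1,1]` with `0 ≤ φ₀ ≤ 1`,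
`φ₀(0) = 1` and `∫ φ₀² = 1`. -/
def IsBumpBase (φ₀ : ℝ → ℝ) : Prop :=
  ContDiff ℝ (⊤ : ℕ∞) φ₀ ∧ (∀ x, φ₀ (-x) = φ₀ x) ∧ tsupport φ₀ ⊆ Set.Icc (-1) 1 ∧
  (∀ x, 0 ≤ φ₀ x ∧ φ₀ x ≤ 1) ∧ φ₀ 0 = 1 ∧ (∫ u : ℝ, (φ₀ u) ^ 2) = 1

/-- `ψ(x) = φ₀(log x)`. -/
def psiF (φ₀ : ℝ → ℝ) (x : ℝ) : ℝ := φ₀ (Real.log x)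

/-- `λ(x) = ∫₀^∞ ψ(y)ψ(x/y) dy/y`. -/
def lamF (φ₀ : ℝ → ℝ) (x : ℝ) : ℝ :=
  ∫ y in Set.Ioi (0 : ℝ), psiF φ₀ y * psiF φ₀ (x / y) / y

/-- `λ_T(x) = T x^{-2iT^{3/2}} λ(x^T)`. -/
def lamT (φ₀ : ℝ → ℝ) (T x : ℝ) : ℂ :=
  (T : ℂ) * (x : ℂ) ^ (-(2 * Complex.I * ((T ^ ((3 : ℝ) / 2) : ℝ) : ℂ))) * (lamF φ₀ (x ^ T) : ℂ)

/-- `u_T(t) = ∫₀^∞ λ_T(x) x^{it-1} dx`. -/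
def uT (φ₀ : ℝ → ℝ) (T t : ℝ) : ℂ :=
  ∫ x in Set.Ioi (0 : ℝ), lamT φ₀ T x * (x : ℂ) ^ (Complex.I * (t : ℂ) - 1)

/-! ### Auxiliary material -/

open Convolution

/-- additive convolution square of the bump -/
def gconv (φ₀ : ℝ → ℝ) : ℝ → ℝ := φ₀ ⋆[ContinuousLinearMap.mul ℝ ℝ] φ₀

/-- its complexification -/
def gconvC (φ₀ : ℝ → ℝ) : ℝ → ℂ := fun v => ((gconv φ₀ v : ℝ) : ℂ)

theorem exp_image_integral {E : Type*} [NormedAddCommGroup E] [NormedSpace ℝ E] (G : ℝ → E) :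
    ∫ y in Set.Ioi (0:ℝ), G y = ∫ v : ℝ, Real.exp v • G (Real.exp v) := by
  rw [← Real.range_exp, ← Set.image_univ,
    integral_image_eq_integral_abs_deriv_smul MeasurableSet.univ
      (fun x _ => (Real.hasDerivAt_exp x).hasDerivWithinAt)
      (Real.exp_injective.injOn)]
  simp [abs_of_pos (Real.exp_pos _)]

theorem lamF_eq (φ₀ : ℝ → ℝ) {x : ℝ} (hx : 0 < x) :
    lamF φ₀ x = gconv φ₀ (Real.log x) := by
  rw [lamF, exp_image_integral, gconv, convolution_def]
  congr 1
  ext v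
  have h1 : Real.log (x / Real.exp v) = Real.log x - v := by
    rw [Real.log_div hx.ne' (Real.exp_ne_zero v), Real.log_exp]
  simp [psiF, Real.log_exp, h1, smul_eq_mul]
  field_simp

theorem cpow_exp_real (u : ℝ) (c : ℂ) :
    ((Real.exp u : ℝ) : ℂ) ^ c = Complex.exp (u * c) := by
  rw [Complex.ofReal_exp, Complex.cpow_def_of_ne_zero (Complex.exp_ne_zero _),
    Complex.log_exp (by simp [Real.pi_pos]) (by simp [Real.pi_pos.le])]

theorem uT_eq (φ₀ : ℝ → ℝ) {T : ℝ} (hT : 0 < T) (t : ℝ) :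
    uT φ₀ T t = ∫ v : ℝ, (gconv φ₀ v : ℂ) *
      Complex.exp (Complex.I * v * (((t - 2 * T ^ ((3:ℝ)/2)) / T : ℝ) : ℂ)) := by
  set T' : ℝ := T ^ ((3:ℝ)/2) with hT'
  set F : ℝ → ℂ := fun v => (gconv φ₀ v : ℂ) *
      Complex.exp (Complex.I * v * (((t - 2 * T') / T : ℝ) : ℂ)) with hF
  have step1 : uT φ₀ T t = ∫ u : ℝ, (T : ℂ) * F (T * u) := by
    rw [uT, exp_image_integral]
    congr 1
    ext u
    have hgx : lamF φ₀ (Real.exp u ^ T) = gconv φ₀ (T * u) := by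
      rw [Real.rpow_def_of_pos (Real.exp_pos u), Real.log_exp,
        lamF_eq φ₀ (Real.exp_pos _), Real.log_exp, mul_comm]
    rw [lamT, hgx, cpow_exp_real, cpow_exp_real, hF]
    rw [Complex.real_smul, Complex.ofReal_exp]
    simp only []
    push_cast
    rw [show Complex.I * (↑T * ↑u) * ((↑t - 2 * (↑(T ^ ((3:ℝ)/2)):ℂ)) / ↑T)
        = ↑u * -(2 * Complex.I * (↑(T ^ ((3:ℝ)/2)) : ℂ)) + ↑u * (Complex.I * t - 1) + ↑u by
      have hTc : (T:ℂ) ≠ 0 := Complex.ofReal_ne_zero.mpr hT.ne'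
      field_simp
      ring]
    rw [Complex.exp_add, Complex.exp_add]
    ring
  rw [step1, integral_const_mul, Measure.integral_comp_mul_left F T,
    abs_of_pos (inv_pos.mpr hT), Complex.real_smul, Complex.ofReal_inv, ← mul_assoc,
    mul_inv_cancel₀ (Complex.ofReal_ne_zero.mpr hT.ne'), one_mul]

open FourierTransform Real in
theorem uT_eq_fourier (φ₀ : ℝ → ℝ) {T : ℝ} (hT : 0 < T) (t : ℝ) :
    uT φ₀ T t = 𝓕 (gconvC φ₀) (-((t - 2 * T ^ ((3:ℝ)/2)) / T) / (2 * π)) := by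
  rw [uT_eq φ₀ hT t, Real.fourier_real_eq_integral_exp_smul]
  congr 1
  ext v
  rw [smul_eq_mul, mul_comm]
  congr 1
  have hre : -2 * π * v * (-((t - 2 * T ^ ((3:ℝ)/2)) / T) / (2 * π))
      = v * ((t - 2 * T ^ ((3:ℝ)/2)) / T) := by
    field_simp
  rw [hre]
  push_cast
  ring

theorem decay_aux (g : ℝ → ℂ) (hg : ContDiff ℝ (⊤:ℕ∞) g) (hc : HasCompactSupport g)
    (k n : ℕ) : ∃ C : ℝ, ∀ x : ℝ, ‖x‖ ^ k * ‖iteratedFDeriv ℝ n g x‖ ≤ C := by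
  have h1 : HasCompactSupport (iteratedFDeriv ℝ n g) := hc.iteratedFDeriv n
  have hF := HasCompactSupport.smul_left (f := fun x : ℝ => ‖x‖ ^ k) h1
  obtain ⟨C, hC⟩ := Continuous.bounded_above_of_compact_support
    ((continuous_norm.pow k).smul (hg.continuous_iteratedFDeriv (by exact_mod_cast le_top))) hF
  refine ⟨C, fun x => ?_⟩
  have := hC x
  calc ‖x‖ ^ k * ‖iteratedFDeriv ℝ n g x‖
      = ‖(‖x‖:ℝ) ^ k • iteratedFDeriv ℝ n g x‖ := by
        rw [norm_smul (α := ℝ) ((‖x‖:ℝ) ^ k) (iteratedFDeriv ℝ n g x)]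
        simp [abs_of_nonneg (pow_nonneg (norm_nonneg x) k)]
    _ ≤ C := this

/-- The convolution square as a Schwartz function. -/
def gS (φ₀ : ℝ → ℝ) (hg : ContDiff ℝ (⊤:ℕ∞) (gconvC φ₀))
    (hc : HasCompactSupport (gconvC φ₀)) : SchwartzMap ℝ ℂ where
  toFun := gconvC φ₀
  smooth' := hg
  decay' := decay_aux _ hg hc

/-- For `f` continuous of polynomial growth, the integral of
`|f| u_T` over `{x : |x - 2T^{3/2}| > T^{3/2}}` decays rapidly as `T → ∞`. -/
theorem uT_tail_integral_rapid_decay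
    (φ₀ : ℝ → ℝ) (hφ₀ : IsBumpBase φ₀)
    (f : ℝ → ℝ) (hf : Continuous f) (A α : ℝ) (hA : 0 < A) (hα : 0 < α)
    (hbd : ∀ x : ℝ, |f x| ≤ A * (1 + |x|) ^ α) :
    ∀ n : ℕ, ∃ C : ℝ, 0 < C ∧ ∃ T₀ : ℝ, 0 < T₀ ∧ ∀ T : ℝ, T₀ ≤ T →
      (∫ x in {x : ℝ | T ^ ((3 : ℝ) / 2) < |x - 2 * T ^ ((3 : ℝ) / 2)|},
        |f x| * (uT φ₀ T x).re) ≤ C / T ^ n := by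
  intro n
  obtain ⟨hsm, -, hsupp, -, -, -⟩ := hφ₀
  have hcφ : HasCompactSupport φ₀ :=
    HasCompactSupport.of_support_subset_isCompact isCompact_Icc ((subset_tsupport φ₀).trans hsupp)
  have hgsm : ContDiff ℝ (⊤:ℕ∞) (gconv φ₀) :=
    HasCompactSupport.contDiff_convolution_right (L := ContinuousLinearMap.mul ℝ ℝ) hcφ
      (hsm.continuous.locallyIntegrable) hsm
  have hgsupp : HasCompactSupport (gconv φ₀) :=
    HasCompactSupport.convolution (L := ContinuousLinearMap.mul ℝ ℝ) hcφ hcφ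
  have hgCsm : ContDiff ℝ (⊤:ℕ∞) (gconvC φ₀) := Complex.ofRealCLM.contDiff.comp hgsm
  have hgCsupp : HasCompactSupport (gconvC φ₀) :=
    hgsupp.comp_left (g := Complex.ofReal) Complex.ofReal_zero
  set G : SchwartzMap ℝ ℂ := gS φ₀ hgCsm hgCsupp with hG
  set FS : SchwartzMap ℝ ℂ := SchwartzMap.fourierTransformCLM ℂ G with hFS
  set m : ℕ := ⌈α⌉₊ with hm
  set k : ℕ := 2*n + 3*m + 6 with hk
  set j : ℕ := 2*n + 2*m + 4 with hj
  obtain ⟨Ck, hCkpos, hCk⟩ := FS.decay k 0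
  have hCk' : ∀ ξ : ℝ, |ξ| ^ k * ‖FourierTransform.fourier (gconvC φ₀) ξ‖ ≤ Ck := by
    intro ξ
    have h := hCk ξ
    rw [norm_iteratedFDeriv_zero, Real.norm_eq_abs] at h
    have h5 : ⇑FS = FourierTransform.fourier (gconvC φ₀) :=
      rfl
    rwa [congrFun h5 ξ] at h
  set D : ℝ := A * 4^m * Ck * (2*Real.pi)^k * 2^k with hD
  have hDpos : 0 < D := by positivity
  set I2 : ℝ := ∫ y : ℝ, (1 + ‖y‖) ^ (-(2:ℝ)) with hI2
  have hI2int : Integrable (fun y : ℝ => (1 + ‖y‖) ^ (-(2:ℝ))) :=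
    integrable_one_add_norm (by simp : ((Module.finrank ℝ ℝ : ℝ)) < 2)
  have hI2nonneg : 0 ≤ I2 :=
    integral_nonneg fun y => Real.rpow_nonneg (by positivity) _
  refine ⟨D * I2 + 1, by positivity, 1, one_pos, ?_⟩
  intro T hT1
  have hT0 : (0:ℝ) < T := lt_of_lt_of_le one_pos hT1
  set R : ℝ := T ^ ((3:ℝ)/2) with hR
  have hR1 : 1 ≤ R := by
    have := Real.rpow_le_rpow_of_exponent_le hT1 (by norm_num : (0:ℝ) ≤ (3:ℝ)/2)
    rwa [Real.rpow_zero] at this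
  have hR0 : 0 < R := lt_of_lt_of_le one_pos hR1
  set c : ℝ := 2 * R with hc
  have hRj : R ^ j = T ^ (k + n) := by
    rw [hR, ← Real.rpow_natCast (T ^ ((3:ℝ)/2)) j, ← Real.rpow_mul hT0.le,
      show (3:ℝ)/2 * (j:ℝ) = ((k + n : ℕ) : ℝ) by rw [hj, hk]; push_cast; ring,
      Real.rpow_natCast]
  have hform : ∀ t : ℝ, uT φ₀ T t
      = FourierTransform.fourier (gconvC φ₀) (-((t - c)/T)/(2*Real.pi)) := fun t =>
    uT_eq_fourier φ₀ hT0 t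
  set B : ℝ → ℝ := fun x => (D / T^n) * ((1 + ‖x - c‖) ^ (-(2:ℝ))) with hB
  have hBint : Integrable B := (hI2int.comp_sub_right c).const_mul _
  have hBnonneg : ∀ x, 0 ≤ B x := fun x =>
    mul_nonneg (div_nonneg hDpos.le (pow_nonneg hT0.le n))
      (Real.rpow_nonneg (by positivity) _)
  have h5 : ⇑FS = FourierTransform.fourier (gconvC φ₀) :=
    rfl
  have hFcont : Continuous (FourierTransform.fourier (gconvC φ₀)) := h5 ▸ FS.continuous
  have huT2 : Continuous fun x : ℝ => uT φ₀ T x :=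
    (hFcont.comp (by fun_prop)).congr fun x => (hform x).symm
  have huTcont : Continuous fun x : ℝ => (uT φ₀ T x).re :=
    Complex.continuous_re.comp huT2
  have hSmeas : MeasurableSet {x : ℝ | R < |x - c|} :=
    measurableSet_lt measurable_const ((measurable_id.sub measurable_const).abs)
  -- the key pointwise bound
  have key : ∀ x ∈ {x : ℝ | R < |x - c|}, |f x| * |(uT φ₀ T x).re| ≤ B x := by
    intro x hx
    simp only [Set.mem_setOf_eq] at hx
    set s : ℝ := |x - c| with hs
    have hs1 : 1 ≤ s := le_trans hR1 hx.le
    have hs0 : 0 < s := lt_of_lt_of_le one_pos hs1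
    set P : ℝ := 1 + s with hP
    have hP0 : 0 < P := by rw [hP]; linarith
    have hP2 : P ≤ 2 * s := by rw [hP]; linarith
    have hRP : R ≤ P := by rw [hP]; linarith
    set w : ℝ := -((x - c)/T)/(2*Real.pi) with hw
    have hwabs : |w| = s / (2*Real.pi*T) := by
      rw [hw, abs_div, abs_neg, abs_div, abs_of_pos hT0,
        abs_of_pos (by positivity : (0:ℝ) < 2*Real.pi), ← hs]
      rw [div_div]
      ring_nf
    have hdecay : ‖uT φ₀ T x‖ ≤ Ck * (2*Real.pi*T)^k / s^k := by
      have h1 := hCk' w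
      rw [hwabs, div_pow, div_mul_eq_mul_div,
        div_le_iff₀ (by positivity : (0:ℝ) < (2*Real.pi*T)^k)] at h1
      rw [hform x, ← hw, le_div_iff₀ (pow_pos hs0 k)]
      calc ‖FourierTransform.fourier (gconvC φ₀) w‖ * s^k
          = s^k * ‖FourierTransform.fourier (gconvC φ₀) w‖ := by ring
        _ ≤ Ck * (2*Real.pi*T)^k := h1
    have hfb : |f x| ≤ A * 4^m * P^m := by
      have h2 : (1 + |x|) ^ α ≤ (1 + |x|) ^ (m:ℝ) :=
        Real.rpow_le_rpow_of_exponent_le (by linarith [abs_nonneg x]) (by rw [hm]; exact_mod_cast Nat.le_ceil α)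
      rw [Real.rpow_natCast] at h2
      have h3 : 1 + |x| ≤ 4 * P := by
        have hxle : |x| ≤ s + 2*R := by
          calc |x| = |(x - c) + c| := by rw [sub_add_cancel]
            _ ≤ |x - c| + |c| := abs_add_le _ _
            _ = s + 2*R := by rw [← hs, hc, abs_of_nonneg (by positivity : (0:ℝ) ≤ 2*R)]
        rw [hP]; linarith
      have h4 : (1+|x|)^m ≤ (4*P)^m := pow_le_pow_left₀ (by positivity) h3 m
      rw [mul_pow] at h4
      calc |f x| ≤ A * (1+|x|)^α := hbd x
        _ ≤ A * (1+|x|)^m := mul_le_mul_of_nonneg_left h2 hA.le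
        _ ≤ A * (4^m * P^m) := mul_le_mul_of_nonneg_left h4 hA.le
        _ = A * 4^m * P^m := by ring
    have core : P^(m+2) * T^(n+k) ≤ 2^k * s^k := by
      calc P^(m+2) * T^(n+k) = P^(m+2) * R^j := by rw [hRj, add_comm n k]
        _ ≤ P^(m+2) * P^j :=
          mul_le_mul_of_nonneg_left (pow_le_pow_left₀ hR0.le hRP j) (by positivity)
        _ = P^k := by rw [← pow_add]; congr 1; rw [hk, hj]; ring
        _ ≤ (2*s)^k := pow_le_pow_left₀ hP0.le hP2 k
        _ = 2^k * s^k := mul_pow 2 s k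
    have hmul : |f x| * |(uT φ₀ T x).re|
        ≤ (A * 4^m * P^m) * (Ck * (2*Real.pi*T)^k / s^k) := by
      refine mul_le_mul hfb ?_ (abs_nonneg _) (by positivity)
      exact (Complex.abs_re_le_norm _).trans hdecay
    have hBx : B x = D / T^n * (P^2)⁻¹ := by
      rw [hB]
      simp only []
      rw [Real.norm_eq_abs, ← hs, ← hP]
      congr 1
      rw [Real.rpow_neg hP0.le,
        show ((2:ℝ)) = ((2:ℕ):ℝ) by norm_num, Real.rpow_natCast]
    have hfinal : (A * 4^m * P^m) * (Ck * (2*Real.pi*T)^k / s^k)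
        ≤ D / T^n * (P^2)⁻¹ := by
      rw [show (A * 4^m * P^m) * (Ck * (2*Real.pi*T)^k / s^k)
          = (A * 4^m * P^m * (Ck * (2*Real.pi*T)^k)) / s^k by ring,
        show D / T^n * (P^2)⁻¹ = D / (T^n * P^2) by rw [← div_eq_mul_inv, div_div],
        div_le_div_iff₀ (pow_pos hs0 k) (by positivity)]
      calc A * 4^m * P^m * (Ck * (2*Real.pi*T)^k) * (T^n * P^2)
          = (A * 4^m * Ck * (2*Real.pi)^k) * (P^(m+2) * T^(n+k)) := by ring
        _ ≤ (A * 4^m * Ck * (2*Real.pi)^k) * (2^k * s^k) :=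
          mul_le_mul_of_nonneg_left core (by positivity)
        _ = D * s^k := by rw [hD]; ring
    calc |f x| * |(uT φ₀ T x).re| ≤ (A * 4^m * P^m) * (Ck * (2*Real.pi*T)^k / s^k) := hmul
      _ ≤ D / T^n * (P^2)⁻¹ := hfinal
      _ = B x := hBx.symm
  have hIB : IntegrableOn B {x : ℝ | R < |x - c|} := hBint.integrableOn
  have hIh : IntegrableOn (fun x => |f x| * (uT φ₀ T x).re) {x : ℝ | R < |x - c|} := by
    refine Integrable.mono' hIB ((hf.abs.mul huTcont).aestronglyMeasurable.restrict) ?_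
    rw [ae_restrict_iff' hSmeas]
    filter_upwards with x hx
    rw [Real.norm_eq_abs, abs_mul, abs_abs]
    exact key x hx
  have hle1 : (∫ x in {x : ℝ | R < |x - c|}, |f x| * (uT φ₀ T x).re)
      ≤ ∫ x in {x : ℝ | R < |x - c|}, B x := by
    refine setIntegral_mono_on hIh hIB hSmeas fun x hx => ?_
    calc |f x| * (uT φ₀ T x).re ≤ |f x| * |(uT φ₀ T x).re| :=
          mul_le_mul_of_nonneg_left (le_abs_self _) (abs_nonneg _)
      _ ≤ B x := key x hx
  have hle2 : (∫ x in {x : ℝ | R < |x - c|}, B x) ≤ ∫ x, B x :=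
    setIntegral_le_integral hBint (Filter.Eventually.of_forall hBnonneg)
  have hBval : (∫ x, B x) = D / T^n * I2 := by
    rw [hB]
    rw [integral_const_mul]
    congr 1
    rw [hI2, ← integral_sub_right_eq_self (fun y : ℝ => (1 + ‖y‖) ^ (-(2:ℝ))) c]
  have hTn : (0:ℝ) < T^n := pow_pos hT0 n
  calc (∫ x in {x : ℝ | R < |x - c|}, |f x| * (uT φ₀ T x).re)
      ≤ D / T^n * I2 := by rw [← hBval]; exact hle1.trans hle2
    _ = D * I2 / T^n := by ring
    _ ≤ (D * I2 + 1) / T^n := by gcongr; linarith
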